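/- arXiv:2512.01488 — 2 statements merged into one kernel-verified Lean document; each statement's English description precedes it below -/
import Mathlib

section
/- Let μ > 1/4 and C > 0. Let x : [1, ∞) → ℂ be twice continuously differentiable, and define y(t) = t² x''(t) + 3t x'(t) + 4μ x(t). Assume that for all t ≥ 1: |x(t)| ≤ C/t, |x'(t)| ≤ C/t², and |y(t)| ≤ C/t². Then for every T ≥ 1, |∫₁ᵀ x(t) dt| ≤ 6C/(4μ − 1). -/
theorem averaged_correlation_bound (μ C : ℝ) (hμ : 1/4 < μ) (hC : 0 < C)
    (x x' x'' : ℝ → ℂ)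
    (hx : ∀ t : ℝ, 1 ≤ t → HasDerivAt x (x' t) t)
    (hx' : ∀ t : ℝ, 1 ≤ t → HasDerivAt x' (x'' t) t)
    (hx'' : ContinuousOn x'' (Set.Ici 1))
    (y : ℝ → ℂ)
    (hy : ∀ t : ℝ, y t = (t:ℂ)^2 * x'' t + 3 * (t:ℂ) * x' t + 4 * (μ:ℂ) * x t)
    (hxb : ∀ t : ℝ, 1 ≤ t → ‖x t‖ ≤ C / t)
    (hx'b : ∀ t : ℝ, 1 ≤ t → ‖x' t‖ ≤ C / t^2)
    (hyb : ∀ t : ℝ, 1 ≤ t → ‖y t‖ ≤ C / t^2) :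
    ∀ T : ℝ, 1 ≤ T → ‖∫ t in (1:ℝ)..T, x t‖ ≤ 6 * C / (4 * μ - 1) := by
  intro T hT
  set a : ℝ := 4 * μ - 1 with ha_def
  have ha : 0 < a := by simp only [ha_def]; linarith
  set G : ℝ → ℂ := fun t => (t:ℂ)^2 * x' t + (t:ℂ) * x t with hG_def
  -- continuity of x and x' on [1,∞)
  have hxc : ContinuousOn x (Set.Ici 1) := fun t ht =>
    (hx t ht).continuousAt.continuousWithinAt
  have hx'c : ContinuousOn x' (Set.Ici 1) := fun t ht =>
    (hx' t ht).continuousAt.continuousWithinAt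
  have hsub : Set.uIcc (1:ℝ) T ⊆ Set.Ici 1 := by
    rw [Set.uIcc_of_le hT]; exact fun s hs => hs.1
  -- derivative of G
  have hG : ∀ t ∈ Set.uIcc (1:ℝ) T,
      HasDerivAt G (y t - (a:ℂ) * x t) t := by
    intro t ht
    have ht1 : (1:ℝ) ≤ t := hsub ht
    have hc : HasDerivAt (fun s : ℝ => (s:ℂ)) 1 t := (hasDerivAt_id t).ofReal_comp
    have hsq : HasDerivAt (fun s : ℝ => (s:ℂ)^2) (2 * (t:ℂ)) t := by
      have : HasDerivAt (fun s : ℝ => (s:ℂ) * (s:ℂ)) _ t := hc.mul hc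
      simp only [pow_two]
      convert this using 1
      ring
    have h1 : HasDerivAt (fun s : ℝ => (s:ℂ)^2 * x' s)
        (2 * (t:ℂ) * x' t + (t:ℂ)^2 * x'' t) t := by
      have : HasDerivAt (fun s : ℝ => (s:ℂ)^2 * x' s) _ t := hsq.mul (hx' t ht1)
      convert this using 1
    have h2 : HasDerivAt (fun s : ℝ => (s:ℂ) * x s)
        (x t + (t:ℂ) * x' t) t := by
      have : HasDerivAt (fun s : ℝ => (s:ℂ) * x s) _ t := hc.mul (hx t ht1)
      convert this using 1
      ring
    have : HasDerivAt (fun s : ℝ => (s:ℂ)^2 * x' s + (s:ℂ) * x s) _ t := h1.add h2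
    convert this using 1
    rw [hy t]
    push_cast [ha_def]
    ring
  -- integrability
  have hyc : ContinuousOn y (Set.Ici 1) := by
    have : ContinuousOn (fun t : ℝ => (t:ℂ)^2 * x'' t + 3 * (t:ℂ) * x' t + 4 * (μ:ℂ) * x t)
        (Set.Ici 1) := by
      apply ContinuousOn.add
      apply ContinuousOn.add
      · exact (Complex.continuous_ofReal.pow 2).continuousOn.mul hx''
      · exact (continuous_const.mul Complex.continuous_ofReal).continuousOn.mul hx'c
      · exact continuousOn_const.mul hxc
    exact this.congr fun t _ => hy t
  have hxint : IntervalIntegrable x MeasureTheory.volume 1 T :=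
    (hxc.mono hsub).intervalIntegrable
  have hyint : IntervalIntegrable y MeasureTheory.volume 1 T :=
    (hyc.mono hsub).intervalIntegrable
  have hG'int : IntervalIntegrable (fun t => y t - (a:ℂ) * x t) MeasureTheory.volume 1 T :=
    hyint.sub (hxint.const_mul _)
  -- FTC
  have hftc : ∫ t in (1:ℝ)..T, (y t - (a:ℂ) * x t) = G T - G 1 :=
    intervalIntegral.integral_eq_sub_of_hasDerivAt hG hG'int
  have hsplit : ∫ t in (1:ℝ)..T, (y t - (a:ℂ) * x t)
      = (∫ t in (1:ℝ)..T, y t) - (a:ℂ) * ∫ t in (1:ℝ)..T, x t := by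
    rw [intervalIntegral.integral_sub hyint (hxint.const_mul _),
      intervalIntegral.integral_const_mul]
  have key : (a:ℂ) * (∫ t in (1:ℝ)..T, x t)
      = (∫ t in (1:ℝ)..T, y t) - (G T - G 1) := by
    rw [← hftc, hsplit]; ring
  -- bound on G
  have hGb : ∀ t : ℝ, 1 ≤ t → ‖G t‖ ≤ 2 * C := by
    intro t ht
    have ht0 : 0 < t := lt_of_lt_of_le one_pos ht
    calc ‖G t‖ ≤ ‖(t:ℂ)^2 * x' t‖ + ‖(t:ℂ) * x t‖ := norm_add_le _ _
      _ = t^2 * ‖x' t‖ + t * ‖x t‖ := by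
          rw [norm_mul, norm_mul, norm_pow, Complex.norm_real,
            Real.norm_of_nonneg ht0.le]
      _ ≤ t^2 * (C / t^2) + t * (C / t) := by
          gcongr
          exacts [hx'b t ht, hxb t ht]
      _ = 2 * C := by field_simp; ring
  -- bound on ∫ y
  have hyI : ‖∫ t in (1:ℝ)..T, y t‖ ≤ C := by
    have hCint : IntervalIntegrable (fun t : ℝ => C / t^2) MeasureTheory.volume 1 T := by
      apply ContinuousOn.intervalIntegrable
      apply ContinuousOn.div continuousOn_const (continuous_pow 2).continuousOn
      intro t ht
      have : (1:ℝ) ≤ t := hsub ht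
      positivity
    have h1 : ‖∫ t in (1:ℝ)..T, y t‖ ≤ |∫ t in (1:ℝ)..T, C / t^2| := by
      apply intervalIntegral.norm_integral_le_abs_of_norm_le _ hCint
      refine Filter.eventually_of_mem
        (MeasureTheory.self_mem_ae_restrict measurableSet_uIoc) ?_
      intro t ht
      exact hyb t (by
        rw [Set.uIoc_of_le hT] at ht
        exact ht.1.le)
    have h2 : (∫ t in (1:ℝ)..T, C / t^2) = -C / T - (-C / 1) := by
      apply intervalIntegral.integral_eq_sub_of_hasDerivAt (f := fun s : ℝ => -C / s)
      · intro t ht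
        have ht0 : (0:ℝ) < t := lt_of_lt_of_le one_pos (hsub ht)
        have h := (hasDerivAt_inv ht0.ne').const_mul (-C)
        have he : -C * -(t^2)⁻¹ = C / t^2 := by field_simp
        rw [he] at h
        simp only [div_eq_mul_inv]
        exact h
      · exact hCint
    have hT0 : 0 < T := lt_of_lt_of_le one_pos hT
    have hCT : 0 ≤ C / T := by positivity
    have hCT' : C / T ≤ C := by
      rw [div_le_iff₀ hT0]; nlinarith
    rw [h2] at h1
    rw [abs_of_nonneg (by rw [neg_div, neg_div]; linarith)] at h1
    rw [neg_div, neg_div] at h1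
    linarith
  -- conclude
  have hnorm : a * ‖∫ t in (1:ℝ)..T, x t‖ ≤ 5 * C := by
    have h := congrArg norm key
    rw [norm_mul, Complex.norm_real, Real.norm_of_nonneg ha.le] at h
    calc a * ‖∫ t in (1:ℝ)..T, x t‖
        = ‖(∫ t in (1:ℝ)..T, y t) - (G T - G 1)‖ := h
      _ ≤ ‖∫ t in (1:ℝ)..T, y t‖ + (‖G T‖ + ‖G 1‖) := by
          refine (norm_sub_le _ _).trans ?_
          gcongr
          exact norm_sub_le _ _
      _ ≤ C + (2 * C + 2 * C) := by
          gcongr <;> first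
            | exact hyI
            | exact hGb T hT
            | exact hGb 1 le_rfl
      _ = 5 * C := by ring
  rw [le_div_iff₀ ha]
  nlinarith [norm_nonneg (∫ t in (1:ℝ)..T, x t)]
end

section
/- Let σ be a finite positive Borel measure on ℝ, let ξ ∈ ℝ and ε > 0, and set T = 1/ε. Then σ((ξ − ε, ξ + ε)) ≤ 4ε² · ∫_ℝ |∫₀ᵀ e^{i(λ−ξ)t} dt|² dσ(λ). -/
open MeasureTheory

lemma spectral_aux (a T : ℝ) (hT : 0 < T) (ha : |a| * T ≤ 1) :
    T / 2 ≤ ‖∫ t in (0:ℝ)..T, Complex.exp (Complex.I * a * t)‖ := by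
  have hcont : Continuous fun t : ℝ => Complex.exp (Complex.I * a * t) := by continuity
  have hint : IntervalIntegrable (fun t : ℝ => Complex.exp (Complex.I * a * t))
      MeasureTheory.volume 0 T := hcont.intervalIntegrable _ _
  have hre : (∫ t in (0:ℝ)..T, Complex.exp (Complex.I * a * t)).re
      = ∫ t in (0:ℝ)..T, Real.cos (a * t) := by
    have h := Complex.reCLM.intervalIntegral_comp_comm hint
    simp only [Complex.reCLM_apply] at h
    rw [← h]
    congr 1
    ext t
    have heq : Complex.I * a * t = ((a * t : ℝ) : ℂ) * Complex.I := by push_cast; ring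
    rw [heq, Complex.exp_ofReal_mul_I_re]
  have hlow : T / 2 ≤ ∫ t in (0:ℝ)..T, Real.cos (a * t) := by
    have hmono : ∫ t in (0:ℝ)..T, (1 - (a * t) ^ 2 / 2) ≤ ∫ t in (0:ℝ)..T, Real.cos (a * t) := by
      apply intervalIntegral.integral_mono_on hT.le
      · exact (by continuity : Continuous fun t : ℝ => 1 - (a * t) ^ 2 / 2).intervalIntegrable _ _
      · exact (by continuity : Continuous fun t : ℝ => Real.cos (a * t)).intervalIntegrable _ _
      · intro t _
        exact Real.one_sub_sq_div_two_le_cos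
    have hcalc : ∫ t in (0:ℝ)..T, (1 - (a * t) ^ 2 / 2) = T - a ^ 2 * T ^ 3 / 6 := by
      have h1 : ∫ t in (0:ℝ)..T, (1 - (a * t) ^ 2 / 2)
          = ∫ t in (0:ℝ)..T, (1 - a ^ 2 / 2 * t ^ 2) := by
        congr 1; ext t; ring
      rw [h1, intervalIntegral.integral_sub (intervalIntegrable_const)
        ((intervalIntegral.intervalIntegrable_pow 2).const_mul _),
        intervalIntegral.integral_const_mul, integral_pow]
      simp; ring
    have ha2 : a ^ 2 * T ^ 2 ≤ 1 := by
      nlinarith [sq_abs a, mul_nonneg (abs_nonneg a) hT.le, ha]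
    have : T - a ^ 2 * T ^ 3 / 6 ≥ T / 2 := by nlinarith
    linarith [hmono, hcalc ▸ hmono]
  calc T / 2 ≤ (∫ t in (0:ℝ)..T, Complex.exp (Complex.I * a * t)).re := by rw [hre]; exact hlow
    _ ≤ ‖∫ t in (0:ℝ)..T, Complex.exp (Complex.I * a * t)‖ := Complex.re_le_norm _

theorem spectral_localization (σ : Measure ℝ) [IsFiniteMeasure σ]
    (ξ ε : ℝ) (hε : 0 < ε) (T : ℝ) (hT : T = 1 / ε) :
    (σ (Set.Ioo (ξ - ε) (ξ + ε))).toReal ≤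
      4 * ε ^ 2 *
        ∫ lam : ℝ, ‖∫ t in (0:ℝ)..T, Complex.exp (Complex.I * (lam - ξ) * t)‖ ^ 2 ∂σ := by
  have hTpos : 0 < T := by rw [hT]; positivity
  set F : ℝ → ℝ := fun lam => ‖∫ t in (0:ℝ)..T, Complex.exp (Complex.I * (lam - ξ) * t)‖ ^ 2
    with hF
  have hcont : Continuous F := by
    apply Continuous.pow
    apply Continuous.norm
    have huncurry : Continuous (Function.uncurry
        fun lam t : ℝ => Complex.exp (Complex.I * (lam - ξ) * t)) := by
      have heq : (Function.uncurry fun lam t : ℝ => Complex.exp (Complex.I * (lam - ξ) * t))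
          = fun p : ℝ × ℝ => Complex.exp (Complex.I * (p.1 - ξ) * p.2) := rfl
      rw [heq]; continuity
    exact intervalIntegral.continuous_parametric_intervalIntegral_of_continuous' huncurry 0 T
  have hFnonneg : ∀ x, 0 ≤ F x := fun x => sq_nonneg _
  have hbound : ∀ lam, F lam ≤ T ^ 2 := by
    intro lam
    have h1 : ‖∫ t in (0:ℝ)..T, Complex.exp (Complex.I * (lam - ξ) * t)‖ ≤ 1 * |T - 0| := by
      apply intervalIntegral.norm_integral_le_of_norm_le_const
      intro t _
      have : Complex.I * (lam - ξ) * t = (((lam - ξ) * t : ℝ) : ℂ) * Complex.I := by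
        push_cast; ring
      rw [this, Complex.norm_exp]
      simp
    simp only [sub_zero, one_mul, abs_of_pos hTpos] at h1
    exact pow_le_pow_left₀ (norm_nonneg _) h1 2
  have hintF : Integrable F σ := by
    apply Integrable.mono' (integrable_const (T ^ 2)) hcont.aestronglyMeasurable
    filter_upwards with x
    rw [Real.norm_eq_abs, abs_of_nonneg (hFnonneg x)]
    exact hbound x
  set S := Set.Ioo (ξ - ε) (ξ + ε) with hS
  have hmeas : MeasurableSet S := measurableSet_Ioo
  have hlb : ∀ lam ∈ S, (T / 2) ^ 2 ≤ F lam := by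
    intro lam hlam
    have habs : |lam - ξ| * T ≤ 1 := by
      have h1 : |lam - ξ| < ε := by
        rw [abs_sub_lt_iff]
        constructor <;> [linarith [hlam.2]; linarith [hlam.1]]
      calc |lam - ξ| * T ≤ ε * T := by
            apply mul_le_mul_of_nonneg_right h1.le hTpos.le
        _ = 1 := by rw [hT]; field_simp
    have h := spectral_aux (lam - ξ) T hTpos habs
    have h2 : ((lam : ℂ) - ξ) = ((lam - ξ : ℝ) : ℂ) := by push_cast; ring
    rw [hF]
    simp only [h2]
    exact pow_le_pow_left₀ (by positivity) h 2
  have key : (T / 2) ^ 2 * (σ S).toReal ≤ ∫ lam, F lam ∂σ := by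
    calc (T / 2) ^ 2 * (σ S).toReal ≤ ∫ lam in S, F lam ∂σ :=
          setIntegral_ge_of_const_le_real hmeas (measure_ne_top σ S) hlb hintF.integrableOn
      _ ≤ ∫ lam, F lam ∂σ := setIntegral_le_integral hintF (by filter_upwards with x; exact hFnonneg x)
  have hT2 : (T / 2) ^ 2 = 1 / (4 * ε ^ 2) := by rw [hT]; field_simp; ring
  rw [hT2] at key
  have h4 : 0 < 4 * ε ^ 2 := by positivity
  calc (σ S).toReal = (4 * ε ^ 2) * (1 / (4 * ε ^ 2) * (σ S).toReal) := by field_simp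
    _ ≤ (4 * ε ^ 2) * ∫ lam, F lam ∂σ := by
        apply mul_le_mul_of_nonneg_left key h4.le
end
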